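/- Let 𝒳 be a nonempty finite set, let P be a probability mass function on 𝒳, and let α ∈ (1,∞). Define Q*(x) = P(x)^α / (∑_{x'∈𝒳} P(x')^α) for each x ∈ 𝒳. Then Q* is a probability mass function on 𝒳 and achieves the maximum of Q ↦ ∑_{x∈𝒳} P(x)·Q(x)^{(α−1)/α} over all probability mass functions Q on 𝒳; that is, ∑_{x∈𝒳} P(x)·Q*(x)^{(α−1)/α} = (∑_{x∈𝒳} P(x)^α)^{1/α}. -/

import Mathlib

open Real BigOperators

/-- A probability mass function on a finite set: nonnegative and sums to 1. -/
def IsPMF {X : Type} [Fintype X] (P : X → ℝ) : Prop :=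
  (∀ x, 0 ≤ P x) ∧ ∑ x, P x = 1

/-- the α-tilted distribution
`Q*(x) = P(x)^α / ∑ x', P(x')^α` is a pmf, it maximizes
`Q ↦ ∑ x, P x * Q x ^ ((α-1)/α)` over pmfs `Q`, and its value is
`(∑ x, P x ^ α) ^ (1/α)`. -/
theorem tilted_pmf_achieves_max {X : Type} [Fintype X] [Nonempty X]
    (P : X → ℝ) (hP : IsPMF P) (α : ℝ) (hα : 1 < α) :
    IsPMF (fun x => P x ^ α / ∑ x', P x' ^ α) ∧
    (∀ Q : X → ℝ, IsPMF Q →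
      ∑ x, P x * Q x ^ ((α - 1) / α) ≤
        ∑ x, P x * (P x ^ α / ∑ x', P x' ^ α) ^ ((α - 1) / α)) ∧
    ∑ x, P x * (P x ^ α / ∑ x', P x' ^ α) ^ ((α - 1) / α)
      = (∑ x, P x ^ α) ^ (1 / α) := by
  obtain ⟨hP0, hP1⟩ := hP
  have hα0 : (0:ℝ) < α := by linarith
  set β : ℝ := (α - 1) / α with hβ
  have hβ0 : 0 < β := div_pos (by linarith) hα0
  have hβ1 : β < 1 := by rw [hβ, div_lt_one hα0]; linarith
  have h1β : 1 - β = 1/α := by rw [hβ]; field_simp; ring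
  set S : ℝ := ∑ x', P x' ^ α with hSdef
  have hS : 0 < S := by
    obtain ⟨x, hx⟩ : ∃ x, 0 < P x := by
      by_contra h
      push_neg at h
      have : ∑ x, P x ≤ 0 := Finset.sum_nonpos (fun i _ => h i)
      linarith
    exact Finset.sum_pos' (fun i _ => rpow_nonneg (hP0 i) α)
      ⟨x, Finset.mem_univ x, rpow_pos_of_pos hx α⟩
  have hαβ : α * β = α - 1 := by rw [hβ]; field_simp
  have hα1β : α * (1 - β) = 1 := by rw [h1β]; field_simp
  have hkey : ∀ x, P x * (P x ^ α / S) ^ β = P x ^ α / S ^ β := by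
    intro x
    rw [Real.div_rpow (rpow_nonneg (hP0 x) α) hS.le, ← Real.rpow_mul (hP0 x), hαβ]
    rcases eq_or_lt_of_le (hP0 x) with h | h
    · rw [← h, Real.zero_rpow (by linarith : α - 1 ≠ 0),
        Real.zero_rpow hα0.ne']
      simp
    · rw [mul_div_assoc']
      congr 1
      have h2 := Real.rpow_add h 1 (α - 1)
      rw [Real.rpow_one] at h2
      rw [← h2]
      norm_num
  have hval : ∑ x, P x * (P x ^ α / S) ^ β = S ^ (1/α) := by
    calc ∑ x, P x * (P x ^ α / S) ^ β = ∑ x, P x ^ α / S ^ β :=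
          Finset.sum_congr rfl fun x _ => hkey x
      _ = S / S ^ β := by rw [← Finset.sum_div]
      _ = S ^ (1 - β) := by
          rw [Real.rpow_sub hS, Real.rpow_one]
      _ = S ^ (1/α) := by rw [h1β]
  refine ⟨⟨fun x => div_nonneg (rpow_nonneg (hP0 x) α) hS.le, ?_⟩, ?_, hval⟩
  · rw [← Finset.sum_div, ← hSdef, div_self hS.ne']
  · intro Q hQ
    obtain ⟨hQ0, hQ1⟩ := hQ
    have hpt : ∀ x, P x * Q x ^ β ≤
        (1 - β) * (P x ^ α / S ^ β) + β * S ^ (1 - β) * Q x := by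
      intro x
      rcases eq_or_lt_of_le (hP0 x) with h | h
      · rw [← h, zero_mul, Real.zero_rpow hα0.ne']
        have hQx := hQ0 x
        have hβ1' : (0:ℝ) ≤ 1 - β := by linarith
        positivity
      · have hc : 0 < P x ^ α / S := div_pos (rpow_pos_of_pos h α) hS
        have young : Q x ^ β * (P x ^ α / S) ^ (1 - β) ≤
            β * Q x + (1 - β) * (P x ^ α / S) :=
          Real.geom_mean_le_arith_mean2_weighted hβ0.le (by linarith) (hQ0 x)
            hc.le (by ring)
        have hPx : P x = S ^ (1 - β) * (P x ^ α / S) ^ (1 - β) := by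
          rw [← Real.mul_rpow hS.le hc.le, mul_div_cancel₀ _ hS.ne',
            ← Real.rpow_mul (hP0 x), hα1β, Real.rpow_one]
        have hpow : S ^ (1 - β) / S = (S ^ β)⁻¹ := by
          have h2 := Real.rpow_sub hS (1 - β) 1
          rw [Real.rpow_one] at h2
          have h3 : (1 - β) - 1 = -β := by ring
          rw [h3, Real.rpow_neg hS.le] at h2
          exact h2.symm
        have hSdiv : S ^ (1 - β) * (P x ^ α / S) = P x ^ α / S ^ β := by
          calc S ^ (1 - β) * (P x ^ α / S) = P x ^ α * (S ^ (1 - β) / S) := by ring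
            _ = P x ^ α * (S ^ β)⁻¹ := by rw [hpow]
            _ = P x ^ α / S ^ β := by rw [div_eq_mul_inv]
        calc P x * Q x ^ β
            = S ^ (1 - β) * (Q x ^ β * (P x ^ α / S) ^ (1 - β)) := by
              nth_rewrite 1 [hPx]; ring
          _ ≤ S ^ (1 - β) * (β * Q x + (1 - β) * (P x ^ α / S)) := by
              apply mul_le_mul_of_nonneg_left young (by positivity)
          _ = (1 - β) * (S ^ (1 - β) * (P x ^ α / S)) + β * S ^ (1 - β) * Q x := by
              ring
          _ = (1 - β) * (P x ^ α / S ^ β) + β * S ^ (1 - β) * Q x := by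
              rw [hSdiv]
    calc ∑ x, P x * Q x ^ β
        ≤ ∑ x, ((1 - β) * (P x ^ α / S ^ β) + β * S ^ (1 - β) * Q x) :=
          Finset.sum_le_sum fun x _ => hpt x
      _ = (1 - β) * (S / S ^ β) + β * S ^ (1 - β) * 1 := by
          rw [Finset.sum_add_distrib, ← Finset.mul_sum, ← Finset.sum_div,
            ← Finset.mul_sum, hQ1, ← hSdef]
      _ = S ^ (1/α) := by
          have hq : S / S ^ β = S ^ (1 - β) := by
            rw [Real.rpow_sub hS, Real.rpow_one]
          rw [hq, ← h1β]; ring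
      _ = ∑ x, P x * (P x ^ α / S) ^ β := hval.symm
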